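/- The function x ↦ x·csc(2πx) is strictly increasing on the interval (0, 1/3). -/

import Mathlib

open Real Set

lemma sin_pos_aux {t : ℝ} (h0 : 0 < t) (h1 : t < 2 * π / 3) : 0 < Real.sin t := by
  apply Real.sin_pos_of_pos_of_lt_pi h0
  nlinarith [Real.pi_pos]

lemma key_aux {t : ℝ} (h0 : 0 < t) (h1 : t < 2 * π / 3) :
    t * Real.cos t < Real.sin t := by
  rcases le_or_gt (Real.cos t) 0 with hc | hc
  · have := sin_pos_aux h0 h1
    nlinarith
  · have ht : t < π / 2 := by
      by_contra hle
      push_neg at hle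
      have : Real.cos t ≤ 0 :=
        Real.cos_nonpos_of_pi_div_two_le_of_le hle (by nlinarith [Real.pi_pos])
      linarith
    have := Real.lt_tan h0 ht
    rw [Real.tan_eq_sin_div_cos, lt_div_iff₀ hc] at this
    linarith

/-- The function `x ↦ x · csc(2πx)` is strictly increasing on `(0, 1/3)`. -/
theorem strictMonoOn_mul_csc :
    StrictMonoOn (fun x : ℝ => x * (Real.sin (2 * Real.pi * x))⁻¹)
      (Set.Ioo (0 : ℝ) (1 / 3)) := by
  have hmem : ∀ x ∈ Set.Ioo (0:ℝ) (1/3), 0 < 2 * π * x ∧ 2 * π * x < 2 * π / 3 := by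
    intro x hx
    constructor
    · have := hx.1
      positivity
    · nlinarith [Real.pi_pos, hx.2]
  have hd : ∀ x ∈ Set.Ioo (0:ℝ) (1/3),
      HasDerivAt (fun x : ℝ => x * (Real.sin (2 * π * x))⁻¹)
        ((1 * Real.sin (2 * π * x) - x * (Real.cos (2 * π * x) * (2 * π)))
          / Real.sin (2 * π * x) ^ 2) x := by
    intro x hx
    obtain ⟨h0, h1⟩ := hmem x hx
    have hs := sin_pos_aux h0 h1
    have hg : HasDerivAt (fun x : ℝ => Real.sin (2 * π * x))
        (Real.cos (2 * π * x) * (2 * π)) x := by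
      simpa using ((hasDerivAt_id x).const_mul (2 * π)).sin
    have := (hasDerivAt_id' x).div hg (ne_of_gt hs)
    simp only [div_eq_mul_inv] at this ⊢
    exact this
  apply StrictMonoOn.mono (s := Set.Ioo (0:ℝ) (1/3)) ?_ (le_refl _)
  apply strictMonoOn_of_hasDerivWithinAt_pos (convex_Ioo _ _)
    (fun x hx => ((hd x hx).continuousAt.continuousWithinAt))
  · intro x hx
    rw [interior_Ioo] at hx
    exact ((hd x hx).hasDerivWithinAt)
  · intro x hx
    rw [interior_Ioo] at hx
    obtain ⟨h0, h1⟩ := hmem x hx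
    have hs := sin_pos_aux h0 h1
    have hk := key_aux h0 h1
    have hx0 := hx.1
    apply div_pos
    · nlinarith
    · positivity
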